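/- Let X ⊆ ℤ² and let P ⊆ ℝ² be a box (product of two compact intervals). Then the set of extreme points of closure(conv X) ∩ P is finite; indeed every extreme point of closure(conv X) ∩ P is an extreme point of closure(conv X) lying in P, or an extreme point (corner) of P, or lies on an edge of P intersected with the boundary of closure(conv X), and there are finitely many points of each type. -/

import Mathlib

open Set


lemma extreme_mono {A B : Set (ℝ × ℝ)} {p : ℝ × ℝ} (hAB : A ⊆ B)
    (hp : p ∈ Set.extremePoints ℝ B) (hpA : p ∈ A) : p ∈ Set.extremePoints ℝ A :=
  ⟨hpA, fun x hx y hy hseg => hp.2 (hAB hx) (hAB hy) hseg⟩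

lemma extreme_of_interior {A B : Set (ℝ × ℝ)} {p : ℝ × ℝ} (hA : Convex ℝ A)
    (hp : p ∈ Set.extremePoints ℝ (A ∩ B)) (hpB : p ∈ interior B) :
    p ∈ Set.extremePoints ℝ A := by
  obtain ⟨⟨hpA, _⟩, hext⟩ := hp
  refine ⟨hpA, fun x hx y hy hseg => ?_⟩
  obtain ⟨ε, hε, hball⟩ := Metric.mem_nhds_iff.1 (mem_interior_iff_mem_nhds.1 hpB)
  set t : ℝ := ε / (‖x - p‖ + ‖y - p‖ + ε) with ht
  have hden : 0 < ‖x - p‖ + ‖y - p‖ + ε := by positivity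
  have ht0 : 0 < t := by positivity
  have ht1 : t ≤ 1 := by
    rw [ht, div_le_one hden]
    have := norm_nonneg (x - p); have := norm_nonneg (y - p); linarith
  have hxlt : t * ‖x - p‖ < ε := by
    rw [ht, div_mul_eq_mul_div, div_lt_iff₀ hden]
    nlinarith [norm_nonneg (x - p), norm_nonneg (y - p)]
  have hylt : t * ‖y - p‖ < ε := by
    rw [ht, div_mul_eq_mul_div, div_lt_iff₀ hden]
    nlinarith [norm_nonneg (x - p), norm_nonneg (y - p)]
  set x' := p + t • (x - p) with hx'
  set y' := p + t • (y - p) with hy'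
  have hx'A : x' ∈ A := by
    have : x' = (1 - t) • p + t • x := by rw [hx']; module
    rw [this]
    exact hA hpA hx (by linarith) (le_of_lt ht0) (by ring)
  have hy'A : y' ∈ A := by
    have : y' = (1 - t) • p + t • y := by rw [hy']; module
    rw [this]
    exact hA hpA hy (by linarith) (le_of_lt ht0) (by ring)
  have hx'B : x' ∈ B := by
    refine hball ?_
    rw [Metric.mem_ball, hx', dist_eq_norm]
    simpa [norm_smul, abs_of_pos ht0] using hxlt
  have hy'B : y' ∈ B := by
    refine hball ?_
    rw [Metric.mem_ball, hy', dist_eq_norm]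
    simpa [norm_smul, abs_of_pos ht0] using hylt
  obtain ⟨a, b, ha, hb, hab, habp⟩ := hseg
  have hseg' : p ∈ openSegment ℝ x' y' := by
    refine ⟨a, b, ha, hb, hab, ?_⟩
    rw [hx', hy']
    have : a • (p + t • (x - p)) + b • (p + t • (y - p))
        = (a + b) • p + t • (a • x + b • y) - t • ((a + b) • p) := by module
    rw [this, hab, habp, one_smul]
    module
  have hx'p := hext ⟨hx'A, hx'B⟩ ⟨hy'A, hy'B⟩ hseg'
  have hy'p := hext ⟨hy'A, hy'B⟩ ⟨hx'A, hx'B⟩ (by rw [openSegment_symm]; exact hseg')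
  suffices h : x = p ∧ y = p from h.1
  constructor
  · have : t • (x - p) = 0 := by
      have := hx'p; rw [hx'] at this; linear_combination (norm := module) this
    have := (smul_eq_zero.1 this).resolve_left (ne_of_gt ht0)
    have := sub_eq_zero.1 this; exact this
  · have : t • (y - p) = 0 := by
      have := hy'p; rw [hy'] at this; linear_combination (norm := module) this
    have := (smul_eq_zero.1 this).resolve_left (ne_of_gt ht0)
    exact sub_eq_zero.1 this

lemma mid_openSegment_fst {p q m : ℝ × ℝ} (h1 : p.1 = m.1) (h2 : q.1 = m.1)
    (hp : p.2 < m.2) (hq : m.2 < q.2) : m ∈ openSegment ℝ p q := by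
  set t : ℝ := (m.2 - p.2) / (q.2 - p.2) with htdef
  have hpq : p.2 < q.2 := hp.trans hq
  have hden : 0 < q.2 - p.2 := by linarith
  have ht0 : 0 < t := div_pos (by linarith) hden
  have ht1 : t < 1 := by rw [htdef, div_lt_one hden]; linarith
  refine ⟨1 - t, t, by linarith, ht0, by ring, ?_⟩
  have h2' : t * (q.2 - p.2) = m.2 - p.2 := by rw [htdef]; field_simp
  have : (1 - t) • p + t • q = (p.1 + t * (q.1 - p.1), p.2 + t * (q.2 - p.2)) := by
    simp [Prod.ext_iff, Prod.smul_def, smul_eq_mul]; constructor <;> ring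
  rw [this]
  have e1 : q.1 - p.1 = 0 := by rw [h1, h2]; ring
  ext
  · simp [e1]; exact h1
  · simp [h2']

lemma mid_openSegment_snd {p q m : ℝ × ℝ} (h1 : p.2 = m.2) (h2 : q.2 = m.2)
    (hp : p.1 < m.1) (hq : m.1 < q.1) : m ∈ openSegment ℝ p q := by
  set t : ℝ := (m.1 - p.1) / (q.1 - p.1) with htdef
  have hpq : p.1 < q.1 := hp.trans hq
  have hden : 0 < q.1 - p.1 := by linarith
  have ht0 : 0 < t := div_pos (by linarith) hden
  have ht1 : t < 1 := by rw [htdef, div_lt_one hden]; linarith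
  refine ⟨1 - t, t, by linarith, ht0, by ring, ?_⟩
  have h2' : t * (q.1 - p.1) = m.1 - p.1 := by rw [htdef]; field_simp
  have : (1 - t) • p + t • q = (p.1 + t * (q.1 - p.1), p.2 + t * (q.2 - p.2)) := by
    simp [Prod.ext_iff, Prod.smul_def, smul_eq_mul]; constructor <;> ring
  rw [this]
  have e1 : q.2 - p.2 = 0 := by rw [h1, h2]; ring
  ext
  · simp [h2']
  · simp [e1]; exact h1

lemma extreme_line_finite_fst (K : Set (ℝ × ℝ)) (c : ℝ) :
    {p | p ∈ Set.extremePoints ℝ K ∧ p.1 = c}.Finite := by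
  set s := {p | p ∈ Set.extremePoints ℝ K ∧ p.1 = c} with hs
  by_contra h
  have hinf : s.Infinite := h
  obtain ⟨a, ha⟩ := hinf.nonempty
  obtain ⟨b, hb⟩ := (hinf.diff (Set.finite_singleton a)).nonempty
  obtain ⟨d, hd⟩ := (hinf.diff ((Set.finite_singleton a).insert b)).nonempty
  have hab : a ≠ b := fun e => hb.2 (by simp [e.symm])
  have had : a ≠ d := fun e => hd.2 (by simp [e.symm])
  have hbd : b ≠ d := fun e => hd.2 (by simp [e.symm])
  obtain hb := hb.1; obtain hd := hd.1
  have key : ∀ x y z : ℝ × ℝ, x ∈ s → y ∈ s → z ∈ s → x.2 < y.2 → y.2 < z.2 → False := by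
    intro x y z hx hy hz h1 h2
    have hseg : y ∈ openSegment ℝ x z :=
      mid_openSegment_fst (hx.2.trans hy.2.symm) (hz.2.trans hy.2.symm) h1 h2
    have := hy.1.2 hx.1.1 hz.1.1 hseg
    rw [this] at h1; exact lt_irrefl _ h1
  have hab2 : a.2 ≠ b.2 := fun e => hab (Prod.ext (ha.2.trans hb.2.symm) e)
  have had2 : a.2 ≠ d.2 := fun e => had (Prod.ext (ha.2.trans hd.2.symm) e)
  have hbd2 : b.2 ≠ d.2 := fun e => hbd (Prod.ext (hb.2.trans hd.2.symm) e)
  rcases hab2.lt_or_gt with h1 | h1 <;> rcases had2.lt_or_gt with h2 | h2 <;>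
    rcases hbd2.lt_or_gt with h3 | h3 <;>
    first
      | exact key a b d ha hb hd (by linarith) (by linarith)
      | exact key a d b ha hd hb (by linarith) (by linarith)
      | exact key b a d hb ha hd (by linarith) (by linarith)
      | exact key b d a hb hd ha (by linarith) (by linarith)
      | exact key d a b hd ha hb (by linarith) (by linarith)
      | exact key d b a hd hb ha (by linarith) (by linarith)

lemma extreme_line_finite_snd (K : Set (ℝ × ℝ)) (c : ℝ) :
    {p | p ∈ Set.extremePoints ℝ K ∧ p.2 = c}.Finite := by
  set s := {p | p ∈ Set.extremePoints ℝ K ∧ p.2 = c} with hs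
  by_contra h
  have hinf : s.Infinite := h
  obtain ⟨a, ha⟩ := hinf.nonempty
  obtain ⟨b, hb⟩ := (hinf.diff (Set.finite_singleton a)).nonempty
  obtain ⟨d, hd⟩ := (hinf.diff ((Set.finite_singleton a).insert b)).nonempty
  have hab : a ≠ b := fun e => hb.2 (by simp [e.symm])
  have had : a ≠ d := fun e => hd.2 (by simp [e.symm])
  have hbd : b ≠ d := fun e => hd.2 (by simp [e.symm])
  obtain hb := hb.1; obtain hd := hd.1
  have key : ∀ x y z : ℝ × ℝ, x ∈ s → y ∈ s → z ∈ s → x.1 < y.1 → y.1 < z.1 → False := by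
    intro x y z hx hy hz h1 h2
    have hseg : y ∈ openSegment ℝ x z :=
      mid_openSegment_snd (hx.2.trans hy.2.symm) (hz.2.trans hy.2.symm) h1 h2
    have := hy.1.2 hx.1.1 hz.1.1 hseg
    rw [this] at h1; exact lt_irrefl _ h1
  have hab2 : a.1 ≠ b.1 := fun e => hab (Prod.ext e (ha.2.trans hb.2.symm))
  have had2 : a.1 ≠ d.1 := fun e => had (Prod.ext e (ha.2.trans hd.2.symm))
  have hbd2 : b.1 ≠ d.1 := fun e => hbd (Prod.ext e (hb.2.trans hd.2.symm))
  rcases hab2.lt_or_gt with h1 | h1 <;> rcases had2.lt_or_gt with h2 | h2 <;>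
    rcases hbd2.lt_or_gt with h3 | h3 <;>
    first
      | exact key a b d ha hb hd (by linarith) (by linarith)
      | exact key a d b ha hd hb (by linarith) (by linarith)
      | exact key b a d hb ha hd (by linarith) (by linarith)
      | exact key b d a hb hd ha (by linarith) (by linarith)
      | exact key d a b hd ha hb (by linarith) (by linarith)
      | exact key d b a hd hb ha (by linarith) (by linarith)

lemma repr_fin3 {S : Set (ℝ × ℝ)} {x : ℝ × ℝ} (hx : x ∈ convexHull ℝ S) :
    ∃ w : Fin 3 → ℝ, ∃ z : Fin 3 → ℝ × ℝ, (∀ i, 0 ≤ w i) ∧ (∑ i, w i) = 1 ∧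
      (∀ i, z i ∈ S) ∧ (∑ i, w i • z i) = x := by
  rw [convexHull_eq_union] at hx
  simp only [mem_iUnion] at hx
  obtain ⟨t, hts, hai, hxt⟩ := hx
  have hcard : t.card ≤ 3 := by
    have h1 := hai.card_le_finrank_succ
    have h2 : Module.finrank ℝ (↥(vectorSpan ℝ (Set.range ((↑) : t → ℝ × ℝ)))) ≤
        Module.finrank ℝ (ℝ × ℝ) := Submodule.finrank_le _
    have h3 : Module.finrank ℝ (ℝ × ℝ) = 2 := by
      simp [Module.finrank_prod]
    rw [Fintype.card_coe] at h1
    omega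
  interval_cases h : t.card
  · rw [Finset.card_eq_zero] at h
    subst h; simp at hxt
  · rw [Finset.card_eq_one] at h
    obtain ⟨a, rfl⟩ := h
    simp only [Finset.coe_singleton, convexHull_singleton, mem_singleton_iff] at hxt
    exact ⟨![1, 0, 0], ![x, x, x], by intro i; fin_cases i <;> norm_num,
      by simp [Fin.sum_univ_three], fun i => by fin_cases i <;> (rw [hxt]; exact hts (by simp)),
      by simp [Fin.sum_univ_three]⟩
  · rw [Finset.card_eq_two] at h
    obtain ⟨a, b, hab, rfl⟩ := h
    rw [Finset.coe_insert, Finset.coe_singleton, convexHull_pair] at hxt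
    obtain ⟨u, v, hu, hv, huv, rfl⟩ := hxt
    refine ⟨![u, v, 0], ![a, b, b], by intro i; fin_cases i <;> simp [hu, hv],
      by simp [Fin.sum_univ_three, huv], fun i => by fin_cases i <;> exact hts (by simp),
      by simp [Fin.sum_univ_three]⟩
  · rw [Finset.card_eq_three] at h
    obtain ⟨a, b, c, hab, hac, hbc, rfl⟩ := h
    have hcoe : (↑({a, b, c} : Finset (ℝ × ℝ)) : Set (ℝ × ℝ)) = insert a {b, c} := by
      simp
    rw [hcoe, convexHull_insert ⟨b, by simp⟩] at hxt
    obtain ⟨y0, hy0, hxy⟩ := Set.mem_iUnion₂.1 hxt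
    rw [mem_singleton_iff] at hy0
    subst hy0
    obtain ⟨y, hy, hseg⟩ := Set.mem_iUnion₂.1 hxy
    rw [convexHull_pair] at hy
    obtain ⟨p', q', hp', hq', hpq', rfl⟩ := hy
    obtain ⟨u, v, hu, hv, huv, rfl⟩ := hseg
    refine ⟨![u, v * p', v * q'], ![y0, b, c],
      by intro i; fin_cases i <;> simp [hu, hv, hp', hq', mul_nonneg],
      by simp only [Fin.sum_univ_three, Matrix.cons_val_zero, Matrix.cons_val_one,
        Matrix.head_cons, Matrix.cons_val_two, Matrix.tail_cons]; nlinarith,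
      fun i => by fin_cases i <;> exact hts (by simp), ?_⟩
    simp only [Fin.sum_univ_three, Matrix.cons_val_zero, Matrix.cons_val_one,
      Matrix.head_cons, Matrix.cons_val_two, Matrix.tail_cons]
    module

lemma isCompact_convexHull2 {S : Set (ℝ × ℝ)} (hS : IsCompact S) :
    IsCompact (convexHull ℝ S) := by
  have hK : IsCompact ((stdSimplex ℝ (Fin 3)) ×ˢ (Set.univ.pi fun _ : Fin 3 => S)) :=
    (isCompact_stdSimplex (𝕜 := ℝ) (ι := Fin 3)).prod (isCompact_univ_pi fun _ => hS)
  have hg : Continuous (fun wz : (Fin 3 → ℝ) × (Fin 3 → ℝ × ℝ) => ∑ i, wz.1 i • wz.2 i) := by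
    refine continuous_finset_sum _ fun i _ => ?_
    exact ((continuous_apply i).comp continuous_fst).smul
      ((continuous_apply i).comp continuous_snd)
  have himg := hK.image hg
  have heq : convexHull ℝ S =
      (fun wz : (Fin 3 → ℝ) × (Fin 3 → ℝ × ℝ) => ∑ i, wz.1 i • wz.2 i) ''
        ((stdSimplex ℝ (Fin 3)) ×ˢ (Set.univ.pi fun _ : Fin 3 => S)) := by
    apply Subset.antisymm
    · intro x hx
      obtain ⟨w, z, hw0, hw1, hz, hsum⟩ := repr_fin3 hx
      exact ⟨(w, z), ⟨⟨hw0, hw1⟩, fun i _ => hz i⟩, hsum⟩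
    · rintro _ ⟨⟨w, z⟩, ⟨⟨hw0, hw1⟩, hz⟩, rfl⟩
      exact (convex_convexHull ℝ S).sum_mem (fun i _ => hw0 i) hw1
        (fun i _ => subset_convexHull ℝ S (hz i (mem_univ i)))
  rw [heq]; exact himg

lemma int_cast_dist {a a' : ℤ} (h : a ≠ a') : (1 : ℝ) ≤ |(a : ℝ) - (a' : ℝ)| := by
  rw [← Int.cast_sub, ← Int.cast_abs]
  exact_mod_cast Int.one_le_abs (sub_ne_zero.2 h)

lemma real_int_dist {x : ℝ} (h : ∀ a : ℤ, x ≠ (a : ℝ)) :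
    ∃ r > 0, ∀ a : ℤ, r ≤ |x - (a : ℝ)| := by
  refine ⟨min (x - ⌊x⌋) (⌈x⌉ - x), ?_, ?_⟩
  · have h1 : (⌊x⌋ : ℝ) < x := lt_of_le_of_ne (Int.floor_le x) (fun e => h ⌊x⌋ e.symm)
    have h2 : x < (⌈x⌉ : ℝ) := lt_of_le_of_ne (Int.le_ceil x) (h ⌈x⌉)
    rw [gt_iff_lt, lt_min_iff]; constructor <;> [linarith; linarith]
  · intro a
    rcases le_or_gt (a : ℝ) x with hc | hc
    · have : (a : ℝ) ≤ (⌊x⌋ : ℝ) := by exact_mod_cast Int.le_floor.2 hc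
      rw [abs_of_nonneg (by linarith)]
      have := min_le_left (x - ⌊x⌋) (⌈x⌉ - x); linarith
    · have : (⌈x⌉ : ℝ) ≤ (a : ℝ) := by exact_mod_cast Int.ceil_le.2 hc.le
      rw [abs_of_nonpos (by linarith)]
      have := min_le_right (x - ⌊x⌋) (⌈x⌉ - x); linarith

lemma lattice_separated {X : Set (ℝ × ℝ)} (hX : X ⊆ {p : ℝ × ℝ | ∃ a b : ℤ, p = ((a : ℝ), (b : ℝ))}) {p : ℝ × ℝ} (hp : p ∉ X) :
    ∃ r > 0, ∀ x ∈ X, r ≤ dist p x := by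
  by_cases h1 : ∃ a : ℤ, p.1 = (a : ℝ)
  · by_cases h2 : ∃ b : ℤ, p.2 = (b : ℝ)
    · -- p is a lattice point not in X
      obtain ⟨a, ha⟩ := h1; obtain ⟨b, hb⟩ := h2
      refine ⟨1, one_pos, fun x hx => ?_⟩
      obtain ⟨a', b', rfl⟩ := hX hx
      have hne : p ≠ ((a' : ℝ), (b' : ℝ)) := fun e => hp (e ▸ hx)
      rw [Prod.dist_eq, le_max_iff]
      rcases (by by_contra hcon; push_neg at hcon; exact hne (Prod.ext (by rw [ha, hcon.1])
        (by rw [hb, hcon.2])) : a ≠ a' ∨ b ≠ b') with hab | hab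
      · left; rw [Real.dist_eq, ha]; exact int_cast_dist hab
      · right; rw [Real.dist_eq, hb]; exact int_cast_dist hab
    · push_neg at h2
      obtain ⟨r, hr, hrd⟩ := real_int_dist h2
      refine ⟨r, hr, fun x hx => ?_⟩
      obtain ⟨a', b', rfl⟩ := hX hx
      rw [Prod.dist_eq, le_max_iff]
      right; rw [Real.dist_eq]; exact hrd b'
  · push_neg at h1
    obtain ⟨r, hr, hrd⟩ := real_int_dist h1
    refine ⟨r, hr, fun x hx => ?_⟩
    obtain ⟨a', b', rfl⟩ := hX hx
    rw [Prod.dist_eq, le_max_iff]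
    left; rw [Real.dist_eq]; exact hrd a'

lemma lattice_box_finite (l u : ℝ × ℝ) :
    ({p : ℝ × ℝ | ∃ a b : ℤ, p = ((a : ℝ), (b : ℝ))} ∩ Set.Icc l u).Finite := by
  have hsub : {p : ℝ × ℝ | ∃ a b : ℤ, p = ((a : ℝ), (b : ℝ))} ∩ Set.Icc l u ⊆
      (fun ab : ℤ × ℤ => ((ab.1 : ℝ), (ab.2 : ℝ))) ''
        (Set.Icc ⌈l.1⌉ ⌊u.1⌋ ×ˢ Set.Icc ⌈l.2⌉ ⌊u.2⌋) := by
    rintro p ⟨⟨a, b, rfl⟩, hmem⟩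
    obtain ⟨hl, hu⟩ := hmem
    refine ⟨(a, b), ⟨⟨?_, ?_⟩, ⟨?_, ?_⟩⟩, rfl⟩
    · exact Int.ceil_le.2 hl.1
    · exact Int.le_floor.2 hu.1
    · exact Int.ceil_le.2 hl.2
    · exact Int.le_floor.2 hu.2
  exact Set.Finite.subset (((Set.finite_Icc _ _).prod (Set.finite_Icc _ _)).image _) hsub

theorem extreme_closure_convexHull_mem {X : Set (ℝ × ℝ)}
    (hX : X ⊆ {p : ℝ × ℝ | ∃ a b : ℤ, p = ((a : ℝ), (b : ℝ))}) {p : ℝ × ℝ}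
    (hp : p ∈ Set.extremePoints ℝ (closure (convexHull ℝ X))) : p ∈ X := by
  by_contra hpX
  obtain ⟨r, hr, hdist⟩ := lattice_separated hX hpX
  set ρ : ℝ := r / 2 with hρdef
  have hρ : 0 < ρ := by positivity
  set S : Set (ℝ × ℝ) := closure (convexHull ℝ X) ∩ Metric.sphere p ρ with hSdef
  -- Step 1 : points of the hull near p are in the hull of S
  have step1 : convexHull ℝ X ∩ Metric.ball p ρ ⊆ convexHull ℝ S := by
    rintro q ⟨hq, hqball⟩
    rw [convexHull_eq] at hq
    obtain ⟨ι, t, w, z, hw0, hw1, hz, hqc⟩ := hq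
    have hqX : q ∈ convexHull ℝ X := by
      rw [convexHull_eq]; exact ⟨ι, t, w, z, hw0, hw1, hz, hqc⟩
    have hqd : dist q p < ρ := Metric.mem_ball.1 hqball
    -- find crossing parameters
    have hcross : ∀ i, i ∈ t → ∃ θ ∈ Set.Icc (0:ℝ) 1,
        dist ((1 - θ) • q + θ • z i) p = ρ := by
      intro i hi
      have hcont : ContinuousOn (fun θ : ℝ => dist ((1 - θ) • q + θ • z i) p)
          (Set.Icc 0 1) := by
        apply Continuous.continuousOn
        exact (((continuous_const.sub continuous_id).smul continuous_const).add
          (continuous_id.smul continuous_const)).dist continuous_const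
      have hmem : ρ ∈ Set.Icc (dist ((1 - (0:ℝ)) • q + (0:ℝ) • z i) p)
          (dist ((1 - (1:ℝ)) • q + (1:ℝ) • z i) p) := by
        constructor
        · simpa using hqd.le
        · simp only [sub_self, zero_smul, one_smul, zero_add]
          have := hdist (z i) (hz i hi)
          rw [dist_comm] at this
          linarith
      obtain ⟨θ, hθmem, hθeq⟩ := intermediate_value_Icc zero_le_one hcont hmem
      exact ⟨θ, hθmem, hθeq⟩
    choose! θ hθmem hθeq using hcross
    have hθpos : ∀ i ∈ t, 0 < θ i := by
      intro i hi
      rcases (hθmem i hi).1.lt_or_eq with h | h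
      · exact h
      · exfalso
        have := hθeq i hi
        rw [← h] at this
        simp at this
        linarith
    set s : ι → ℝ × ℝ := fun i => (1 - θ i) • q + θ i • z i with hsdef
    have hsS : ∀ i ∈ t, s i ∈ S := by
      intro i hi
      constructor
      · apply subset_closure
        exact (convex_convexHull ℝ X) hqX (subset_convexHull ℝ X (hz i hi))
          (by linarith [(hθmem i hi).2]) (hθpos i hi).le (by ring)
      · exact hθeq i hi
    set μ : ι → ℝ := fun i => w i / θ i with hμdef
    have hμ0 : ∀ i ∈ t, 0 ≤ μ i := fun i hi => div_nonneg (hw0 i hi) (hθpos i hi).le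
    have hμw : ∀ i ∈ t, w i ≤ μ i := by
      intro i hi
      rw [hμdef]
      rcases (hw0 i hi).lt_or_eq with h | h
      · exact le_div_self (hw0 i hi) (hθpos i hi) (hθmem i hi).2
      · simp [← h]
    have hμsum : (1:ℝ) ≤ ∑ i ∈ t, μ i := by
      rw [← hw1]; exact Finset.sum_le_sum hμw
    have hqsum : ∑ i ∈ t, w i • z i = q := by
      rw [← hqc, Finset.centerMass, hw1, inv_one, one_smul]
    have hkey : ∑ i ∈ t, μ i • s i = (∑ i ∈ t, μ i) • q := by
      have hterm : ∀ i ∈ t, μ i • s i = (μ i - w i) • q + w i • z i := by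
        intro i hi
        rw [hsdef, hμdef]
        have hθne : θ i ≠ 0 := (hθpos i hi).ne'
        have : w i / θ i * (1 - θ i) = w i / θ i - w i := by field_simp
        simp only [smul_add, smul_smul]
        rw [this]
        have : w i / θ i * θ i = w i := div_mul_cancel₀ _ hθne
        rw [this, sub_smul]
      rw [Finset.sum_congr rfl hterm, Finset.sum_add_distrib, ← Finset.sum_smul, hqsum,
        Finset.sum_sub_distrib, hw1, sub_smul, one_smul]
      abel
    have : t.centerMass μ s = q := by
      rw [Finset.centerMass, hkey, smul_smul, inv_mul_cancel₀ (by linarith), one_smul]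
    rw [← this]
    exact Finset.centerMass_mem_convexHull t hμ0 (by linarith) hsS
  -- Step 2 : p is in the closure of convexHull S
  have step2 : p ∈ closure (convexHull ℝ S) := by
    have hpc : p ∈ closure (convexHull ℝ X ∩ Metric.ball p ρ) := by
      rw [mem_closure_iff_nhds]
      intro U hU
      obtain ⟨y, ⟨hyU, hyb⟩, hyX⟩ := mem_closure_iff_nhds.1 hp.1 (U ∩ Metric.ball p ρ)
        (Filter.inter_mem hU (Metric.ball_mem_nhds p hρ))
      exact ⟨y, hyU, hyX, hyb⟩
    exact closure_mono step1 hpc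
  -- Step 3 : conclude
  have hScomp : IsCompact S := (isCompact_sphere p ρ).inter_left isClosed_closure
  have hconvS : IsCompact (convexHull ℝ S) := isCompact_convexHull2 hScomp
  rw [hconvS.isClosed.closure_eq] at step2
  have hsub : convexHull ℝ S ⊆ closure (convexHull ℝ X) :=
    convexHull_min inter_subset_left ((convex_convexHull ℝ X).closure)
  have hpext : p ∈ Set.extremePoints ℝ (convexHull ℝ S) := extreme_mono hsub hp step2
  have hpS : p ∈ S := extremePoints_convexHull_subset hpext
  have : dist p p = ρ := hpS.2
  simp at this
  linarith



theorem extremePoints_inter_box_finite_dim2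
    (X : Set (ℝ × ℝ))
    (hX : X ⊆ {p : ℝ × ℝ | ∃ a b : ℤ, p = ((a : ℝ), (b : ℝ))})
    (l u : ℝ × ℝ) :
    (Set.extremePoints ℝ (closure (convexHull ℝ X) ∩ Set.Icc l u)).Finite ∧
    ∀ p ∈ Set.extremePoints ℝ (closure (convexHull ℝ X) ∩ Set.Icc l u),
      (p ∈ Set.extremePoints ℝ (closure (convexHull ℝ X)) ∧ p ∈ Set.Icc l u) ∨
      p ∈ Set.extremePoints ℝ (Set.Icc l u) ∨
      (p ∈ frontier (Set.Icc l u) ∧ p ∈ frontier (closure (convexHull ℝ X))) := by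
  have hCconv : Convex ℝ (closure (convexHull ℝ X)) := (convex_convexHull ℝ X).closure
  have hIcc : Set.Icc l u = Set.Icc l.1 u.1 ×ˢ Set.Icc l.2 u.2 := Icc_prod_eq l u
  have hIccConv : Convex ℝ (Set.Icc l u) := by
    rw [hIcc]; exact (convex_Icc _ _).prod (convex_Icc _ _)
  have hIntIcc : interior (Set.Icc l u) = Set.Ioo l.1 u.1 ×ˢ Set.Ioo l.2 u.2 := by
    rw [hIcc, interior_prod_eq, interior_Icc, interior_Icc]
  constructor
  · -- finiteness
    set E := Set.extremePoints ℝ (closure (convexHull ℝ X) ∩ Set.Icc l u) with hE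
    have hsub : E ⊆ (({p : ℝ × ℝ | ∃ a b : ℤ, p = ((a : ℝ), (b : ℝ))} ∩ Set.Icc l u)
        ∪ {p | p ∈ E ∧ p.1 = l.1} ∪ {p | p ∈ E ∧ p.1 = u.1}
        ∪ {p | p ∈ E ∧ p.2 = l.2} ∪ {p | p ∈ E ∧ p.2 = u.2}) := by
      intro p hp
      by_cases h1 : p.1 = l.1
      · exact Or.inl (Or.inl (Or.inl (Or.inr ⟨hp, h1⟩)))
      by_cases h2 : p.1 = u.1
      · exact Or.inl (Or.inl (Or.inr ⟨hp, h2⟩))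
      by_cases h3 : p.2 = l.2
      · exact Or.inl (Or.inr ⟨hp, h3⟩)
      by_cases h4 : p.2 = u.2
      · exact Or.inr ⟨hp, h4⟩
      have hpIcc : p ∈ Set.Icc l u := hp.1.2
      have hpint : p ∈ interior (Set.Icc l u) := by
        rw [hIntIcc]
        rw [hIcc] at hpIcc
        obtain ⟨⟨ha1, hb1⟩, ha2, hb2⟩ := hpIcc
        exact ⟨⟨lt_of_le_of_ne ha1 (Ne.symm h1), lt_of_le_of_ne hb1 h2⟩,
          ⟨lt_of_le_of_ne ha2 (Ne.symm h3), lt_of_le_of_ne hb2 h4⟩⟩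
      have hpC : p ∈ Set.extremePoints ℝ (closure (convexHull ℝ X)) :=
        extreme_of_interior hCconv hp hpint
      have hpX : p ∈ X := extreme_closure_convexHull_mem hX hpC
      exact Or.inl (Or.inl (Or.inl (Or.inl ⟨hX hpX, hpIcc⟩)))
    refine Set.Finite.subset ?_ hsub
    refine ((((lattice_box_finite l u).union ?_).union ?_).union ?_).union ?_
    · exact extreme_line_finite_fst _ l.1
    · exact extreme_line_finite_fst _ u.1
    · exact extreme_line_finite_snd _ l.2
    · exact extreme_line_finite_snd _ u.2
  · intro p hp
    by_cases hPint : p ∈ interior (Set.Icc l u)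
    · exact Or.inl ⟨extreme_of_interior hCconv hp hPint, hp.1.2⟩
    by_cases hCint : p ∈ interior (closure (convexHull ℝ X))
    · refine Or.inr (Or.inl ?_)
      have hp' := hp
      rw [Set.inter_comm] at hp'
      exact extreme_of_interior hIccConv hp' hCint
    · exact Or.inr (Or.inr ⟨⟨subset_closure hp.1.2, hPint⟩,
        ⟨subset_closure hp.1.1, hCint⟩⟩)
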